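/- The number of interval multiset estimates for the assessment problem P^{l,η} equals Σ_{k=1}^{min(l,η)} (l−k+1)·C(η−1, k−1), where C denotes the binomial coefficient. -/

import Mathlib

lemma aux_card_sum (k n : ℕ) :
    ((Fintype.piFinset (fun _ : Fin k => Finset.range (n+1))).filter
      (fun f => ∑ i, f i = n)).card = (k + n - 1).choose n := by
  have h := Sym.card_sym_eq_choose (α := Fin k) n
  rw [Fintype.card_fin] at h
  rw [← h, ← Fintype.card_coe]
  have key : ∀ f : Fin k → ℕ, Multiset.card (Finsupp.toMultiset (Finsupp.equivFunOnFinite.symm f))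
      = ∑ i, f i := by
    intro f
    rw [Finsupp.card_toMultiset, Finsupp.sum_fintype]
    · simp
    · intro; rfl
  apply Fintype.card_congr
  refine ⟨fun f => ⟨(Finsupp.equivFunOnFinite.symm f.1).toMultiset, by
      rw [key]; exact (Finset.mem_filter.mp f.2).2⟩,
    fun s => ⟨fun i => Multiset.count i (s : Multiset (Fin k)), ?_⟩, ?_, ?_⟩
  · simp only [Finset.mem_filter, Fintype.mem_piFinset, Finset.mem_range]
    constructor
    · intro i
      have h2 := Multiset.count_le_card i (s : Multiset (Fin k))
      have h3 : Multiset.card (s : Multiset (Fin k)) = n := s.2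
      omega
    · rw [Multiset.sum_count_eq_card (fun a _ => Finset.mem_univ a)]
      exact s.2
  · intro f
    apply Subtype.ext
    funext i
    simp [Finsupp.count_toMultiset]
  · intro s
    apply Subtype.ext
    apply Multiset.ext.mpr
    intro a
    simp [Finsupp.count_toMultiset]

lemma aux_card_pos_comp (k n : ℕ) (hk : 0 < k) (hn : 0 < n) :
    ((Fintype.piFinset (fun _ : Fin k => Finset.range (n+1))).filter
      (fun f => (∑ i, f i = n) ∧ ∀ i, f i ≠ 0)).card = (n - 1).choose (k - 1) := by
  by_cases hkn : k ≤ n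
  · have : ((Fintype.piFinset (fun _ : Fin k => Finset.range (n+1))).filter
        (fun f => (∑ i, f i = n) ∧ ∀ i, f i ≠ 0)).card
        = ((Fintype.piFinset (fun _ : Fin k => Finset.range (n-k+1))).filter
        (fun g => ∑ i, g i = n - k)).card := by
      apply Finset.card_nbij (i := fun f i => f i - 1)
      · intro f hf
        simp only [Finset.mem_coe, Finset.mem_filter, Fintype.mem_piFinset, Finset.mem_range] at hf ⊢
        obtain ⟨hr, hs, hp⟩ := hf
        have hb : ∀ i, 1 ≤ f i := fun i => Nat.one_le_iff_ne_zero.mpr (hp i)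
        have hsum : (∑ i, (f i - 1)) + k = n := by
          have h2 : ∑ i, f i = (∑ i, (f i - 1)) + ∑ _i : Fin k, (1 : ℕ) := by
            rw [← Finset.sum_add_distrib]
            exact Finset.sum_congr rfl fun i _ => by have := hb i; omega
          rw [Finset.sum_const, Finset.card_univ, Fintype.card_fin, smul_eq_mul, mul_one] at h2
          omega
        constructor
        · intro i
          have h1 : f i - 1 ≤ ∑ j, (f j - 1) :=
            Finset.single_le_sum (f := fun j => f j - 1) (fun j _ => Nat.zero_le _)
              (Finset.mem_univ i)
          omega
        · omega
      · intro f hf g hg hfg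
        simp only [Finset.mem_coe, Finset.mem_filter, Fintype.mem_piFinset] at hf hg
        funext i
        have h1 : f i - 1 = g i - 1 := congrFun hfg i
        have := hf.2.2 i; have := hg.2.2 i
        omega
      · intro g hg
        simp only [Finset.mem_coe, Finset.mem_filter, Fintype.mem_piFinset,
          Finset.mem_range] at hg
        refine ⟨fun i => g i + 1, ?_, by funext i; simp⟩
        simp only [Finset.mem_coe, Finset.mem_filter, Fintype.mem_piFinset, Finset.mem_range]
        refine ⟨?_, ?_, ?_⟩
        · intro i
          have := hg.1 i
          omega
        · rw [Finset.sum_add_distrib, hg.2, Finset.sum_const, Finset.card_univ, Fintype.card_fin,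
            smul_eq_mul, mul_one]
          omega
        · intro i
          omega
    rw [this, aux_card_sum]
    clear this
    have h1 : k + (n - k) - 1 = n - 1 := by omega
    have h2 : n - k = (n - 1) - (k - 1) := by omega
    rw [h1, h2]
    exact Nat.choose_symm (by omega)
  · rw [Nat.choose_eq_zero_of_lt (by omega), Finset.card_eq_zero]
    rw [Finset.filter_eq_empty_iff]
    intro f hf
    rintro ⟨hs, hp⟩
    have hb : ∀ i, 1 ≤ f i := fun i => Nat.one_le_iff_ne_zero.mpr (hp i)
    have : k ≤ ∑ i, f i := by
      calc k = ∑ _i : Fin k, 1 := by simp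
      _ ≤ ∑ i, f i := Finset.sum_le_sum fun i _ => hb i
    omega

lemma aux_fiber (l η : ℕ) (a b : Fin l) (hab : a ≤ b) (hη : 0 < η) :
    ((Fintype.piFinset (fun _ : Fin l => Finset.range (η+1))).filter
      (fun e => (∑ i, e i = η) ∧ ∀ i, e i ≠ 0 ↔ i ∈ Finset.Icc a b)).card
    = (η - 1).choose ((b : ℕ) - (a : ℕ)) := by
  set s := Finset.Icc a b with hs
  have hcard : s.card = (b : ℕ) + 1 - (a : ℕ) := Fin.card_Icc a b
  have hk : 0 < s.card := by
    rw [hcard]; have : (a : ℕ) ≤ b := hab; omega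
  have key : ((Fintype.piFinset (fun _ : Fin l => Finset.range (η+1))).filter
      (fun e => (∑ i, e i = η) ∧ ∀ i, e i ≠ 0 ↔ i ∈ s)).card
      = ((Fintype.piFinset (fun _ : Fin s.card => Finset.range (η+1))).filter
      (fun f => (∑ j, f j = η) ∧ ∀ j, f j ≠ 0)).card := by
    set σ : Fin s.card ≃ {x // x ∈ s} := s.equivFin.symm with hσ
    have hsum_eq : ∀ e : Fin l → ℕ, (∀ i, e i ≠ 0 ↔ i ∈ s) →
        ∑ j, e (σ j : Fin l) = ∑ i, e i := by
      intro e he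
      rw [Equiv.sum_comp σ (fun x : {x // x ∈ s} => e x), Finset.sum_coe_sort s e]
      exact Finset.sum_subset (Finset.subset_univ s)
        (fun x _ hx => by by_contra h; exact hx ((he x).mp h))
    apply Finset.card_nbij (i := fun e j => e (σ j : Fin l))
    · intro e he
      simp only [Finset.mem_coe, Finset.mem_filter, Fintype.mem_piFinset, Finset.mem_range] at he ⊢
      obtain ⟨hr, hsm, hsp⟩ := he
      exact ⟨fun j => hr _, by rw [hsum_eq e hsp]; exact hsm,
        fun j => (hsp _).mpr (σ j).2⟩
    · intro e he e' he' hee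
      simp only [Finset.mem_coe, Finset.mem_filter] at he he'
      funext x
      by_cases hx : x ∈ s
      · have h1 : e (σ (σ.symm ⟨x, hx⟩) : Fin l) = e' (σ (σ.symm ⟨x, hx⟩) : Fin l) :=
          congrFun hee (σ.symm ⟨x, hx⟩)
        rwa [Equiv.apply_symm_apply] at h1
      · have h1 : ¬ e x ≠ 0 := fun h => hx ((he.2.2 x).mp h)
        have h2 : ¬ e' x ≠ 0 := fun h => hx ((he'.2.2 x).mp h)
        omega
    · intro f hf
      simp only [Finset.mem_coe, Finset.mem_filter, Fintype.mem_piFinset,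
        Finset.mem_range] at hf
      obtain ⟨hr, hsm, hsp⟩ := hf
      set e : Fin l → ℕ := fun x => if hx : x ∈ s then f (σ.symm ⟨x, hx⟩) else 0 with he
      have heσ : ∀ j, e (σ j : Fin l) = f j := by
        intro j
        rw [he]
        dsimp only
        rw [dif_pos (σ j).2]
        congr 1
        rw [show (⟨(σ j : Fin l), (σ j).2⟩ : {x // x ∈ s}) = σ j from rfl,
          Equiv.symm_apply_apply]
      have hesupp : ∀ x, e x ≠ 0 ↔ x ∈ s := by
        intro x
        rw [he]
        dsimp only
        by_cases hx : x ∈ s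
        · simp only [dif_pos hx, hx, iff_true]
          exact hsp _
        · simp [dif_neg hx, hx]
      refine ⟨e, ?_, funext heσ⟩
      simp only [Finset.mem_coe, Finset.mem_filter, Fintype.mem_piFinset, Finset.mem_range]
      refine ⟨?_, ?_, hesupp⟩
      · intro x
        rw [he]
        dsimp only
        by_cases hx : x ∈ s
        · rw [dif_pos hx]; exact hr _
        · rw [dif_neg hx]; omega
      · rw [← hsum_eq e hesupp]
        exact (Finset.sum_congr rfl fun j _ => heσ j).trans hsm
  rw [key, aux_card_pos_comp s.card η hk hη, hcard]
  clear key
  congr 1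
  have hab' : (a : ℕ) ≤ b := hab
  omega

/-- The number of interval multiset estimates for the assessment problem `P^{l,η}`
(tuples `(η_1,…,η_l) ∈ ℕ^l` with total `η` whose support is a nonempty interval of
consecutive levels) equals `Σ_{k=1}^{min(l,η)} (l−k+1)·C(η−1, k−1)`. -/
theorem stmt_2 (l η : ℕ) (hl : 0 < l) (hη : 0 < η) :
    ((Fintype.piFinset (fun _ : Fin l => Finset.range (η + 1))).filter
        (fun e => (∑ i, e i = η) ∧
          ∃ a b : Fin l, a ≤ b ∧ ∀ i : Fin l, e i ≠ 0 ↔ (a ≤ i ∧ i ≤ b))).card =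
      ∑ k ∈ Finset.Icc 1 (min l η), (l - k + 1) * (η - 1).choose (k - 1) := by
  classical
  set F := Fintype.piFinset (fun _ : Fin l => Finset.range (η + 1)) with hF
  set supp : (Fin l → ℕ) → Finset (Fin l) :=
    fun e => Finset.univ.filter (fun i => e i ≠ 0) with hsupp
  have hsupp_eq : ∀ (e : Fin l → ℕ) (a b : Fin l),
      (∀ i : Fin l, e i ≠ 0 ↔ (a ≤ i ∧ i ≤ b)) → supp e = Finset.Icc a b := by
    intro e a b h
    ext i
    simp only [hsupp, Finset.mem_filter, Finset.mem_univ, true_and, Finset.mem_Icc]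
    exact h i
  have hminmax : ∀ a b : Fin l, a ≤ b → ∀ h : (Finset.Icc a b).Nonempty,
      (Finset.Icc a b).min' h = a ∧ (Finset.Icc a b).max' h = b := by
    intro a b hab h
    constructor
    · exact le_antisymm (Finset.min'_le _ _ (Finset.mem_Icc.mpr ⟨le_refl a, hab⟩))
        (Finset.le_min' _ _ _ fun x hx => (Finset.mem_Icc.mp hx).1)
    · exact le_antisymm (Finset.max'_le _ _ _ fun x hx => (Finset.mem_Icc.mp hx).2)
        (Finset.le_max' _ _ (Finset.mem_Icc.mpr ⟨hab, le_refl b⟩))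
  set φ : (Fin l → ℕ) → Fin l × Fin l := fun e =>
    if h : (supp e).Nonempty then ((supp e).min' h, (supp e).max' h)
    else (⟨0, hl⟩, ⟨0, hl⟩) with hφ
  set P : Finset (Fin l × Fin l) :=
    Finset.univ.filter (fun p : Fin l × Fin l => p.1 ≤ p.2) with hP
  have hmaps : ∀ e ∈ F.filter (fun e => (∑ i, e i = η) ∧
      ∃ a b : Fin l, a ≤ b ∧ ∀ i : Fin l, e i ≠ 0 ↔ (a ≤ i ∧ i ≤ b)), φ e ∈ P := by
    intro e he
    obtain ⟨_, _, a, b, hab, hiff⟩ := Finset.mem_filter.mp he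
    have hse := hsupp_eq e a b hiff
    have hne : (supp e).Nonempty := by
      rw [hse]; exact ⟨a, Finset.mem_Icc.mpr ⟨le_refl a, hab⟩⟩
    obtain ⟨hmin, hmax⟩ := hminmax a b hab (hse ▸ hne)
    simp only [hP, Finset.mem_filter, Finset.mem_univ, true_and, hφ, dif_pos hne]
    show (supp e).min' hne ≤ (supp e).max' hne
    exact Finset.min'_le _ _ (Finset.max'_mem _ _)
  rw [Finset.card_eq_sum_card_fiberwise hmaps]
  have hfiber : ∀ p ∈ P, ((F.filter (fun e => (∑ i, e i = η) ∧
      ∃ a b : Fin l, a ≤ b ∧ ∀ i : Fin l, e i ≠ 0 ↔ (a ≤ i ∧ i ≤ b))).filter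
        (fun e => φ e = p)).card = (η - 1).choose ((p.2 : ℕ) - (p.1 : ℕ)) := by
    intro p hp
    have hple : p.1 ≤ p.2 := (Finset.mem_filter.mp hp).2
    rw [← aux_fiber l η p.1 p.2 hple hη]
    congr 1
    rw [Finset.filter_filter]
    apply Finset.filter_congr
    intro e heF
    constructor
    · rintro ⟨⟨hsum, a, b, hab, hiff⟩, hφe⟩
      have hse := hsupp_eq e a b hiff
      have hne : (supp e).Nonempty := by
        rw [hse]; exact ⟨a, Finset.mem_Icc.mpr ⟨le_refl a, hab⟩⟩
      obtain ⟨hmin, hmax⟩ := hminmax a b hab (hse ▸ hne)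
      rw [hφ] at hφe
      simp only [dif_pos hne] at hφe
      have hpa : p.1 = a := by
        rw [← hφe]
        simp only
        rw [show (supp e).min' hne = a from by
          rw [show (supp e).min' hne = (Finset.Icc a b).min' (hse ▸ hne) from by congr 1]
          exact hmin]
      have hpb : p.2 = b := by
        rw [← hφe]
        simp only
        rw [show (supp e).max' hne = b from by
          rw [show (supp e).max' hne = (Finset.Icc a b).max' (hse ▸ hne) from by congr 1]
          exact hmax]
      refine ⟨hsum, fun i => ?_⟩
      rw [hpa, hpb, Finset.mem_Icc]
      exact hiff i
    · rintro ⟨hsum, hiff⟩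
      have hiff' : ∀ i : Fin l, e i ≠ 0 ↔ (p.1 ≤ i ∧ i ≤ p.2) := by
        intro i; rw [hiff i, Finset.mem_Icc]
      have hse := hsupp_eq e p.1 p.2 hiff'
      have hne : (supp e).Nonempty := by
        rw [hse]; exact ⟨p.1, Finset.mem_Icc.mpr ⟨le_refl _, hple⟩⟩
      obtain ⟨hmin, hmax⟩ := hminmax p.1 p.2 hple (hse ▸ hne)
      refine ⟨⟨hsum, p.1, p.2, hple, hiff'⟩, ?_⟩
      rw [hφ]
      simp only [dif_pos hne]
      have h1 : (supp e).min' hne = (Finset.Icc p.1 p.2).min' (hse ▸ hne) := by congr 1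
      have h2 : (supp e).max' hne = (Finset.Icc p.1 p.2).max' (hse ▸ hne) := by congr 1
      rw [h1, h2, hmin, hmax]
  rw [Finset.sum_congr rfl hfiber]
  have hmaps2 : ∀ p ∈ P, (p.2 : ℕ) - (p.1 : ℕ) ∈ Finset.range l := by
    intro p hp
    have h4 : (p.2 : ℕ) < l := p.2.2
    simp only [Finset.mem_range]
    omega
  rw [← Finset.sum_fiberwise_of_maps_to hmaps2 (fun p => (η - 1).choose ((p.2 : ℕ) - (p.1 : ℕ)))]
  have hpaircard : ∀ d ∈ Finset.range l,
      (P.filter (fun p => (p.2 : ℕ) - (p.1 : ℕ) = d)).card = l - d := by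
    intro d hd
    rw [Finset.mem_range] at hd
    rw [show l - d = (Finset.range (l - d)).card from (Finset.card_range _).symm]
    apply Finset.card_nbij (i := fun p => (p.1 : ℕ))
    · intro p hp
      simp only [hP, Finset.mem_coe, Finset.mem_filter, Finset.mem_univ, true_and] at hp
      obtain ⟨h1, h2⟩ := hp
      have h3 : (p.1 : ℕ) ≤ p.2 := h1
      have h4 : (p.2 : ℕ) < l := p.2.2
      simp only [Finset.mem_coe, Finset.mem_range]
      omega
    · intro p hp q hq hpq
      simp only [hP, Finset.mem_coe, Finset.mem_filter, Finset.mem_univ, true_and] at hp hq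
      have h3 : (p.1 : ℕ) ≤ p.2 := hp.1
      have h4 : (q.1 : ℕ) ≤ q.2 := hq.1
      have h6 : (p.1 : ℕ) = q.1 := hpq
      have h5 : (p.2 : ℕ) = q.2 := by
        have := hp.2; have := hq.2; omega
      ext
      · exact h6
      · exact h5
    · intro x hx
      simp only [Finset.mem_coe, Finset.mem_range] at hx
      refine ⟨(⟨x, by omega⟩, ⟨x + d, by omega⟩), ?_, rfl⟩
      simp only [hP, Finset.mem_coe, Finset.mem_filter, Finset.mem_univ, true_and]
      exact ⟨by simp [Fin.le_def], by simp⟩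
  have hinner : ∀ d ∈ Finset.range l,
      ∑ p ∈ P.filter (fun p => (p.2 : ℕ) - (p.1 : ℕ) = d),
        (η - 1).choose ((p.2 : ℕ) - (p.1 : ℕ)) = (l - d) * (η - 1).choose d := by
    intro d hd
    rw [Finset.sum_congr rfl (fun p hp => by rw [(Finset.mem_filter.mp hp).2]),
      Finset.sum_const, hpaircard d hd, smul_eq_mul]
  rw [Finset.sum_congr rfl hinner]
  -- goal: ∑ d ∈ range l, (l - d) * choose (η-1) d = ∑ k ∈ Icc 1 (min l η), (l-k+1)*choose (η-1) (k-1)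
  have hsub : Finset.range (min l η) ⊆ Finset.range l :=
    Finset.range_mono (min_le_left l η)
  rw [← Finset.sum_subset hsub (by
    intro d hd hnd
    rw [Finset.mem_range] at hd
    rw [Finset.mem_range, not_lt] at hnd
    have hdη : η ≤ d := by omega
    rw [Nat.choose_eq_zero_of_lt (by omega), mul_zero])]
  apply Finset.sum_nbij' (i := fun d => d + 1) (j := fun k => k - 1)
  · intro d hd
    rw [Finset.mem_range] at hd
    rw [Finset.mem_Icc]
    omega
  · intro k hk
    rw [Finset.mem_Icc] at hk
    rw [Finset.mem_range]
    omega
  · intro d hd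
    omega
  · intro k hk
    rw [Finset.mem_Icc] at hk
    omega
  · intro d hd
    rw [Finset.mem_range] at hd
    have h1 : l - (d + 1) + 1 = l - d := by omega
    rw [h1, Nat.add_sub_cancel]
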